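/- Let K > 0 and let (c_k) and (d_k), indexed by k ∈ ℤ² with k₁k₂ ≠ 0, be real numbers with |c_k − d_k| ≤ K|k|^{−5/2}. For ε ∈ (0,1) fixed and N a positive integer, let Ŝ(N,α) = { k ∈ ℤ² : for i = 1,2, ε³N < |k_i| < N/ε and |k_i|^{3/4}·|{k_iα_i}| < ε^{−2}·N^{−1/4} }, and let ψ_k(x,α;N) = cos( 2π⟨k,x⟩ + π(N−1)({k₁α₁}+{k₂α₂}) ) · sin(πN{k₁α₁}) sin(πN{k₂α₂}) / ( N^{1/2} sin(π{k₁α₁}) sin(π{k₂α₂}) ). Then there is a constant C = C(K,ε) such that for all N, ‖ Σ_{k ∈ Ŝ(N,α)} (c_k − d_k)·ψ_k ‖²_{L²(𝕋² × (𝕋² ∖ E_N(ε)))} ≤ C·N^{−1}; in particular the sums with coefficients c_k and with coefficients d_k over Ŝ(N,α) differ by o(1) in L² as N → ∞. -/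

import Mathlib

set_option maxHeartbeats 1000000

open MeasureTheory Filter





/-- The representative of `t` modulo `1` lying in `(-1/2, 1/2]` (denoted `{t}` in the paper). -/
noncomputable def sfrac (t : ℝ) : ℝ := t - ⌈t - 1/2⌉

/-- Distance from a real number to the nearest integer (`‖t‖ = dist(t,ℤ)`). -/
noncomputable def distToInt (t : ℝ) : ℝ := |t - round t|

/-- A fundamental domain for `𝕋² = ℝ²/ℤ²`. -/
def unitCell : Set (ℝ × ℝ) := Set.Ioc 0 1 ×ˢ Set.Ioc 0 1

/-- Euclidean norm `|k|` of `k ∈ ℤ²`. -/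
noncomputable def knorm (k : ℤ × ℤ) : ℝ := Real.sqrt ((k.1 : ℝ) ^ 2 + (k.2 : ℝ) ^ 2)

/-- The coefficient-free oscillating factor `ψ_k(x,α;N)`. -/
noncomputable def psiterm (N : ℕ) (x α : ℝ × ℝ) (k : ℤ × ℤ) : ℝ :=
  Real.cos (2 * Real.pi * ((k.1 : ℝ) * x.1 + (k.2 : ℝ) * x.2)
      + Real.pi * ((N : ℝ) - 1) * (sfrac ((k.1 : ℝ) * α.1) + sfrac ((k.2 : ℝ) * α.2))) *
    (Real.sin (Real.pi * (N : ℝ) * sfrac ((k.1 : ℝ) * α.1)) *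
      Real.sin (Real.pi * (N : ℝ) * sfrac ((k.2 : ℝ) * α.2))) /
    ((N : ℝ) ^ ((1 : ℝ)/2) * Real.sin (Real.pi * sfrac ((k.1 : ℝ) * α.1)) *
      Real.sin (Real.pi * sfrac ((k.2 : ℝ) * α.2)))

/-- The exceptional set `E_N(ε)` of `α ∈ 𝕋²` (realized in `ℝ²`). -/
def badSet (ε : ℝ) (N : ℕ) : Set (ℝ × ℝ) :=
  {α | ∃ n : ℕ, 1 ≤ n ∧ (n : ℝ) ≤ (N : ℝ) / ε ∧
      ((n : ℝ) ^ ((3 : ℝ)/4) * distToInt ((n : ℝ) * α.1)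
          < ε ^ ((1 : ℝ)/2) * (N : ℝ) ^ (-(1 : ℝ)/4) ∨
        (n : ℝ) ^ ((3 : ℝ)/4) * distToInt ((n : ℝ) * α.2)
          < ε ^ ((1 : ℝ)/2) * (N : ℝ) ^ (-(1 : ℝ)/4))}

/-- The Haar measure on `𝕋² × (𝕋² ∖ E_N(ε))`, realized on fundamental domains. -/
noncomputable def μE (ε : ℝ) (N : ℕ) : Measure ((ℝ × ℝ) × (ℝ × ℝ)) :=
  (volume.restrict unitCell).prod (volume.restrict (unitCell \ badSet ε N))

/-- The resonant set `Ŝ(N,α)`. -/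
def Shat (ε : ℝ) (N : ℕ) (α : ℝ × ℝ) : Set (ℤ × ℤ) :=
  {k | ε ^ 3 * (N : ℝ) < (|k.1| : ℝ) ∧ ε ^ 3 * (N : ℝ) < (|k.2| : ℝ) ∧
    (|k.1| : ℝ) < (N : ℝ) / ε ∧ (|k.2| : ℝ) < (N : ℝ) / ε ∧
    (|k.1| : ℝ) ^ ((3 : ℝ)/4) * |sfrac ((k.1 : ℝ) * α.1)|
      < ε ^ (-(2 : ℝ)) * (N : ℝ) ^ (-(1 : ℝ)/4) ∧
    (|k.2| : ℝ) ^ ((3 : ℝ)/4) * |sfrac ((k.2 : ℝ) * α.2)|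
      < ε ^ (-(2 : ℝ)) * (N : ℝ) ^ (-(1 : ℝ)/4)}




lemma abs_sfrac_le (t : ℝ) : |sfrac t| ≤ 1/2 := by
  have h1 : (t - 1/2 : ℝ) ≤ ⌈t - 1/2⌉ := Int.le_ceil _
  have h2 : (⌈t - 1/2⌉ : ℝ) < (t - 1/2) + 1 := Int.ceil_lt_add_one _
  rw [abs_le]; unfold sfrac; constructor <;> linarith

lemma nearest_key {t : ℝ} {r : ℤ} (h : |t - r| ≤ 1/2) (m : ℤ) : |t - r| ≤ |t - m| := by
  by_cases hm : m = r
  · simp [hm]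
  · have h1 : (1:ℤ) ≤ |m - r| := Int.one_le_abs (sub_ne_zero.mpr hm)
    have h1' : (1:ℝ) ≤ |(m:ℝ) - r| := by exact_mod_cast (by push_cast [← Int.cast_abs]; exact_mod_cast h1 : (1:ℝ) ≤ ((|m - r| : ℤ) : ℝ))
    have tri : |(m:ℝ) - r| ≤ |(m:ℝ) - t| + |t - r| := abs_sub_le _ _ _
    have : (1:ℝ)/2 ≤ |(m:ℝ) - t| := by linarith
    calc |t - r| ≤ 1/2 := h
    _ ≤ |(m:ℝ) - t| := this
    _ = |t - m| := abs_sub_comm _ _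

lemma distToInt_le (t : ℝ) (m : ℤ) : distToInt t ≤ |t - m| :=
  nearest_key (abs_sub_round t) m

lemma abs_sfrac_le' (t : ℝ) (m : ℤ) : |sfrac t| ≤ |t - m| :=
  nearest_key (by simpa [sfrac] using abs_sfrac_le t) m

lemma abs_sfrac_eq_distToInt (t : ℝ) : |sfrac t| = distToInt t := by
  refine le_antisymm ?_ ?_
  · exact abs_sfrac_le' t (round t)
  · exact distToInt_le t ⌈t - 1/2⌉

lemma distToInt_neg (t : ℝ) : distToInt (-t) = distToInt t := by
  refine le_antisymm ?_ ?_
  · calc distToInt (-t) ≤ |(-t) - (-(round t) : ℤ)| := distToInt_le _ _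
      _ = |t - round t| := by push_cast; rw [← abs_neg]; ring_nf
      _ = distToInt t := rfl
  · calc distToInt t ≤ |t - (-(round (-t)) : ℤ)| := distToInt_le _ _
      _ = |(-t) - round (-t)| := by push_cast; rw [← abs_neg]; ring_nf
      _ = distToInt (-t) := rfl

lemma two_abs_le_abs_sin {t : ℝ} (h : |t| ≤ 1/2) : 2*|t| ≤ |Real.sin (Real.pi * t)| := by
  have hpi := Real.pi_pos
  have h0 : (0:ℝ) ≤ |t| := abs_nonneg t
  have hs : |Real.sin (Real.pi * t)| = Real.sin (Real.pi * |t|) := by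
    rcases abs_cases t with ⟨he, _⟩ | ⟨he, _⟩
    · rw [he]
      exact abs_of_nonneg (Real.sin_nonneg_of_nonneg_of_le_pi (by positivity)
        (by nlinarith [abs_nonneg t, h]))
    · have hsn : 0 ≤ Real.sin (Real.pi * -t) := Real.sin_nonneg_of_nonneg_of_le_pi
        (by nlinarith [abs_nonneg t]) (by nlinarith [abs_nonneg t, h])
      have hle : Real.sin (Real.pi * t) ≤ 0 := by
        rw [mul_neg, Real.sin_neg] at hsn; linarith
      rw [he, mul_neg, Real.sin_neg, abs_of_nonpos hle]
  rw [hs]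
  have := Real.mul_le_sin (x := Real.pi * |t|) (by positivity) (by nlinarith)
  calc 2*|t| = 2 / Real.pi * (Real.pi * |t|) := by field_simp
  _ ≤ Real.sin (Real.pi * |t|) := this


lemma integrable_bdd {X : Type*} [MeasurableSpace X] (μ : Measure X) [IsFiniteMeasure μ]
    {f : X → ℝ} (hf : AEStronglyMeasurable f μ) (C : ℝ) (h : ∀ᵐ x ∂μ, |f x| ≤ C) :
    Integrable f μ :=
  Integrable.mono' (integrable_const C) hf (by simpa [Real.norm_eq_abs] using h)

instance : IsFiniteMeasure (volume.restrict (Set.Ioc (0:ℝ) 1)) :=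
  ⟨by simp [Measure.restrict_apply_univ, Real.volume_Ioc]⟩

lemma volume_unitCell : volume unitCell = 1 := by
  rw [unitCell, show (volume : Measure (ℝ × ℝ)) = Measure.prod volume volume from
    Measure.volume_eq_prod ℝ ℝ, Measure.prod_prod]
  simp [Real.volume_Ioc]

instance : IsFiniteMeasure (volume.restrict unitCell) :=
  ⟨by simp [Measure.restrict_apply_univ, volume_unitCell]⟩

lemma cos1D (m : ℤ) (hm : m ≠ 0) (c : ℝ) :
    ∫ t in Set.Ioc (0:ℝ) 1, Real.cos (2*Real.pi*m*t + c) = 0 := by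
  have hω : (2*Real.pi*m : ℝ) ≠ 0 := by
    have := Real.pi_ne_zero
    simp [this, hm]
  set ω : ℝ := 2*Real.pi*m with hωdef
  have hderiv : ∀ t ∈ Set.uIcc (0:ℝ) 1,
      HasDerivAt (fun t => Real.sin (ω*t + c) / ω) (Real.cos (ω*t + c)) t := by
    intro t _
    have h1 : HasDerivAt (fun t : ℝ => ω*t + c) ω t := by
      simpa using ((hasDerivAt_id t).const_mul ω).add_const c
    have h2 := (Real.hasDerivAt_sin (ω*t + c)).comp t h1
    have h3 := h2.div_const ω
    simpa [mul_div_cancel_right₀ _ hω] using h3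
  have hint : IntervalIntegrable (fun t => Real.cos (ω*t + c)) volume 0 1 :=
    (Continuous.intervalIntegrable (by continuity) _ _)
  have := intervalIntegral.integral_eq_sub_of_hasDerivAt hderiv hint
  have h0 : ∫ t in (0:ℝ)..1, Real.cos (ω*t + c) = 0 := by
    rw [this]
    have e1 : ω*1 + c = c + (m:ℝ) * (2*Real.pi) := by rw [hωdef]; ring
    have e2 : ω*0 + c = c := by ring
    rw [e1, e2, Real.sin_add_int_mul_two_pi, sub_self]
  rw [show (∫ t in Set.Ioc (0:ℝ) 1, Real.cos (ω*t + c)) = ∫ t in (0:ℝ)..1, Real.cos (ω*t + c)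
    from (intervalIntegral.integral_of_le zero_le_one).symm]
  exact h0

lemma cos2D (m : ℤ × ℤ) (hm : m ≠ 0) (c : ℝ) :
    ∫ x in unitCell, Real.cos (2*Real.pi*((m.1:ℝ)*x.1 + (m.2:ℝ)*x.2) + c) = 0 := by
  have hrw : (volume : Measure (ℝ × ℝ)).restrict unitCell
      = (volume.restrict (Set.Ioc (0:ℝ) 1)).prod (volume.restrict (Set.Ioc (0:ℝ) 1)) := by
    rw [unitCell, show (volume : Measure (ℝ × ℝ)) = (volume : Measure ℝ).prod volume from
      Measure.volume_eq_prod ℝ ℝ]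
    exact (Measure.prod_restrict _ _).symm
  rw [hrw]
  have hintg : Integrable (fun x : ℝ × ℝ =>
      Real.cos (2*Real.pi*((m.1:ℝ)*x.1 + (m.2:ℝ)*x.2) + c))
      ((volume.restrict (Set.Ioc (0:ℝ) 1)).prod (volume.restrict (Set.Ioc (0:ℝ) 1))) := by
    apply integrable_bdd _ (Continuous.aestronglyMeasurable (by continuity)) 1
    exact Filter.Eventually.of_forall (fun x => Real.abs_cos_le_one _)
  rw [MeasureTheory.integral_prod _ hintg]
  by_cases h2 : m.2 = 0
  · have h1 : m.1 ≠ 0 := by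
      intro h1; exact hm (Prod.ext h1 h2)
    have : ∀ x₁ : ℝ, ∫ x₂ in Set.Ioc (0:ℝ) 1,
        Real.cos (2*Real.pi*((m.1:ℝ)*x₁ + (m.2:ℝ)*x₂) + c)
        = Real.cos (2*Real.pi*(m.1:ℝ)*x₁ + c) := by
      intro x₁
      have : ∀ x₂ : ℝ, Real.cos (2*Real.pi*((m.1:ℝ)*x₁ + (m.2:ℝ)*x₂) + c)
          = Real.cos (2*Real.pi*(m.1:ℝ)*x₁ + c) := by
        intro x₂; rw [h2]; push_cast; ring_nf
      simp only [this]
      rw [setIntegral_const]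
      simp [Real.volume_Ioc]
    simp only [this]
    exact cos1D m.1 h1 c
  · have : ∀ x₁ : ℝ, ∫ x₂ in Set.Ioc (0:ℝ) 1,
        Real.cos (2*Real.pi*((m.1:ℝ)*x₁ + (m.2:ℝ)*x₂) + c) = 0 := by
      intro x₁
      have he : ∀ x₂ : ℝ, Real.cos (2*Real.pi*((m.1:ℝ)*x₁ + (m.2:ℝ)*x₂) + c)
          = Real.cos (2*Real.pi*(m.2:ℝ)*x₂ + (2*Real.pi*(m.1:ℝ)*x₁ + c)) := by
        intro x₂; ring_nf
      simp only [he]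
      exact cos1D m.2 h2 _
    simp only [this]
    simp
lemma cont_cos (k : ℤ × ℤ) (c : ℝ) :
    Continuous fun x : ℝ × ℝ => Real.cos (2*Real.pi*((k.1:ℝ)*x.1+(k.2:ℝ)*x.2)+c) := by
  apply Real.continuous_cos.comp
  exact ((continuous_const.mul ((continuous_const.mul continuous_fst).add
    (continuous_const.mul continuous_snd)))).add continuous_const


lemma cos_mul_cos (p q : ℝ) :
    Real.cos p * Real.cos q = (Real.cos (p+q) + Real.cos (p-q))/2 := by
  rw [Real.cos_add, Real.cos_sub]; ring

lemma Jbound (k k' : ℤ × ℤ) (a b : ℝ) :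
    |∫ x in unitCell, Real.cos (2*Real.pi*((k.1:ℝ)*x.1+(k.2:ℝ)*x.2)+a) *
        Real.cos (2*Real.pi*((k'.1:ℝ)*x.1+(k'.2:ℝ)*x.2)+b)|
      ≤ (if k' = k then (1:ℝ) else 0) + (if k' = -k then 1 else 0) := by
  by_cases h : k' = k ∨ k' = -k
  · have h1 : (1:ℝ) ≤ (if k' = k then (1:ℝ) else 0) + (if k' = -k then 1 else 0) := by
      rcases h with h | h <;> simp [h] <;> positivity
    refine le_trans ?_ h1
    have := MeasureTheory.norm_setIntegral_le_of_norm_le_const (μ := volume) (s := unitCell)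
      (f := fun x : ℝ × ℝ => Real.cos (2*Real.pi*((k.1:ℝ)*x.1+(k.2:ℝ)*x.2)+a) *
        Real.cos (2*Real.pi*((k'.1:ℝ)*x.1+(k'.2:ℝ)*x.2)+b)) (C := 1)
      (by rw [volume_unitCell]; exact ENNReal.one_lt_top)
      (fun x _ => by
        rw [Real.norm_eq_abs, abs_mul]
        exact mul_le_one₀ (Real.abs_cos_le_one _) (abs_nonneg _) (Real.abs_cos_le_one _))
    rw [Real.norm_eq_abs] at this
    calc |_| ≤ 1 * (volume unitCell).toReal := this
      _ = 1 := by rw [volume_unitCell]; simp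
  · push_neg at h
    obtain ⟨h1, h2⟩ := h
    have hm1 : k + k' ≠ 0 := by
      intro hc; exact h2 (by rw [eq_neg_iff_add_eq_zero, add_comm]; exact hc)
    have hm2 : k - k' ≠ 0 := by
      intro hc; exact h1 (by rw [← sub_eq_zero, ← neg_sub k k', neg_eq_zero]; exact hc)
    have hx : ∀ x : ℝ × ℝ,
        Real.cos (2*Real.pi*((k.1:ℝ)*x.1+(k.2:ℝ)*x.2)+a) *
          Real.cos (2*Real.pi*((k'.1:ℝ)*x.1+(k'.2:ℝ)*x.2)+b)
        = (1/2) * Real.cos (2*Real.pi*(((k+k').1:ℝ)*x.1 + (((k+k').2:ℝ))*x.2) + (a+b))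
          + (1/2) * Real.cos (2*Real.pi*(((k-k').1:ℝ)*x.1 + (((k-k').2:ℝ))*x.2) + (a-b)) := by
      intro x
      rw [cos_mul_cos]
      have e1 : (2*Real.pi*((k.1:ℝ)*x.1+(k.2:ℝ)*x.2)+a) + (2*Real.pi*((k'.1:ℝ)*x.1+(k'.2:ℝ)*x.2)+b)
          = 2*Real.pi*(((k+k').1:ℝ)*x.1 + (((k+k').2:ℝ))*x.2) + (a+b) := by
        push_cast [Prod.fst_add, Prod.snd_add]; ring
      have e2 : (2*Real.pi*((k.1:ℝ)*x.1+(k.2:ℝ)*x.2)+a) - (2*Real.pi*((k'.1:ℝ)*x.1+(k'.2:ℝ)*x.2)+b)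
          = 2*Real.pi*(((k-k').1:ℝ)*x.1 + (((k-k').2:ℝ))*x.2) + (a-b) := by
        push_cast [Prod.fst_sub, Prod.snd_sub]; ring
      rw [e1, e2]; ring
    simp only [hx]
    rw [MeasureTheory.integral_add]
    · rw [MeasureTheory.integral_const_mul, MeasureTheory.integral_const_mul,
        cos2D _ hm1, cos2D _ hm2]
      simp [h1, h2]
    · exact (integrable_bdd _ (Continuous.aestronglyMeasurable (continuous_const.mul (cont_cos _ _))) (1/2)
        (Filter.Eventually.of_forall (fun x => by
          rw [abs_mul]
          calc |(1:ℝ)/2| * |Real.cos _| ≤ |(1:ℝ)/2| * 1 :=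
            mul_le_mul_of_nonneg_left (Real.abs_cos_le_one _) (abs_nonneg _)
          _ = 1/2 := by norm_num)))
    · exact (integrable_bdd _ (Continuous.aestronglyMeasurable (continuous_const.mul (cont_cos _ _))) (1/2)
        (Filter.Eventually.of_forall (fun x => by
          rw [abs_mul]
          calc |(1:ℝ)/2| * |Real.cos _| ≤ |(1:ℝ)/2| * 1 :=
            mul_le_mul_of_nonneg_left (Real.abs_cos_le_one _) (abs_nonneg _)
          _ = 1/2 := by norm_num)))

lemma inner_bound (T : Finset (ℤ × ℤ)) (hT : ∀ k ∈ T, -k ∈ T) (q φ : ℤ × ℤ → ℝ) :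
    ∫ x in unitCell,
      (∑ k ∈ T, q k * Real.cos (2*Real.pi*((k.1:ℝ)*x.1+(k.2:ℝ)*x.2) + φ k))^2
    ≤ 2 * ∑ k ∈ T, (q k)^2 := by
  have hx : ∀ x : ℝ × ℝ,
      (∑ k ∈ T, q k * Real.cos (2*Real.pi*((k.1:ℝ)*x.1+(k.2:ℝ)*x.2) + φ k))^2
      = ∑ k ∈ T, ∑ k' ∈ T, q k * q k' *
        (Real.cos (2*Real.pi*((k.1:ℝ)*x.1+(k.2:ℝ)*x.2) + φ k) *
          Real.cos (2*Real.pi*((k'.1:ℝ)*x.1+(k'.2:ℝ)*x.2) + φ k')) := by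
    intro x
    rw [sq, Finset.sum_mul_sum]
    refine Finset.sum_congr rfl (fun k _ => Finset.sum_congr rfl (fun k' _ => by ring))
  simp only [hx]
  have hintg : ∀ k k' : ℤ × ℤ, Integrable (fun x : ℝ × ℝ => q k * q k' *
      (Real.cos (2*Real.pi*((k.1:ℝ)*x.1+(k.2:ℝ)*x.2) + φ k) *
        Real.cos (2*Real.pi*((k'.1:ℝ)*x.1+(k'.2:ℝ)*x.2) + φ k')))
      (volume.restrict unitCell) := by
    intro k k'
    refine integrable_bdd _ (Continuous.aestronglyMeasurable (continuous_const.mul ((cont_cos k (φ k)).mul (cont_cos k' (φ k'))))) (|q k * q k'|)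
      (Filter.Eventually.of_forall (fun x => ?_))
    rw [abs_mul]
    calc |q k * q k'| * |_| ≤ |q k * q k'| * 1 := by
          refine mul_le_mul_of_nonneg_left ?_ (abs_nonneg _)
          rw [abs_mul]
          exact mul_le_one₀ (Real.abs_cos_le_one _) (abs_nonneg _) (Real.abs_cos_le_one _)
      _ = |q k * q k'| := mul_one _
  rw [MeasureTheory.integral_finset_sum _ (fun k _ => integrable_finset_sum _ (fun k' _ => hintg k k'))]
  have hsum : ∀ k ∈ T,
      (∫ x in unitCell, ∑ k' ∈ T, q k * q k' *
        (Real.cos (2*Real.pi*((k.1:ℝ)*x.1+(k.2:ℝ)*x.2) + φ k) *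
          Real.cos (2*Real.pi*((k'.1:ℝ)*x.1+(k'.2:ℝ)*x.2) + φ k')))
      ≤ |q k| * |q k| + |q k| * |q (-k)| := by
    intro k hk
    rw [MeasureTheory.integral_finset_sum _ (fun k' _ => hintg k k')]
    have step1 : ∀ k' ∈ T,
        (∫ x in unitCell, q k * q k' *
          (Real.cos (2*Real.pi*((k.1:ℝ)*x.1+(k.2:ℝ)*x.2) + φ k) *
            Real.cos (2*Real.pi*((k'.1:ℝ)*x.1+(k'.2:ℝ)*x.2) + φ k')))
        ≤ |q k| * |q k'| * ((if k' = k then (1:ℝ) else 0) + (if k' = -k then 1 else 0)) := by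
      intro k' _
      rw [MeasureTheory.integral_const_mul]
      calc q k * q k' * ∫ x in unitCell, _
          ≤ |q k * q k' * ∫ x in unitCell, Real.cos (2*Real.pi*((k.1:ℝ)*x.1+(k.2:ℝ)*x.2) + φ k) *
              Real.cos (2*Real.pi*((k'.1:ℝ)*x.1+(k'.2:ℝ)*x.2) + φ k')| := le_abs_self _
        _ = |q k| * |q k'| * |∫ x in unitCell, Real.cos (2*Real.pi*((k.1:ℝ)*x.1+(k.2:ℝ)*x.2) + φ k) *
              Real.cos (2*Real.pi*((k'.1:ℝ)*x.1+(k'.2:ℝ)*x.2) + φ k')| := by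
            rw [abs_mul, abs_mul]
        _ ≤ |q k| * |q k'| * ((if k' = k then (1:ℝ) else 0) + (if k' = -k then 1 else 0)) := by
            refine mul_le_mul_of_nonneg_left (Jbound k k' (φ k) (φ k')) ?_
            positivity
    calc (∑ k' ∈ T, ∫ x in unitCell, q k * q k' *
          (Real.cos (2*Real.pi*((k.1:ℝ)*x.1+(k.2:ℝ)*x.2) + φ k) *
            Real.cos (2*Real.pi*((k'.1:ℝ)*x.1+(k'.2:ℝ)*x.2) + φ k')))
        ≤ ∑ k' ∈ T, |q k| * |q k'| * ((if k' = k then (1:ℝ) else 0) + (if k' = -k then 1 else 0)) :=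
          Finset.sum_le_sum step1
      _ = |q k| * |q k| + |q k| * |q (-k)| := by
          simp only [mul_add, Finset.sum_add_distrib, mul_ite, mul_one, mul_zero]
          rw [Finset.sum_ite_eq' T k (fun k' => |q k| * |q k'|),
            Finset.sum_ite_eq' T (-k) (fun k' => |q k| * |q k'|)]
          rw [if_pos hk, if_pos (hT k hk)]
  calc (∑ k ∈ T, ∫ x in unitCell, ∑ k' ∈ T, q k * q k' *
        (Real.cos (2*Real.pi*((k.1:ℝ)*x.1+(k.2:ℝ)*x.2) + φ k) *
          Real.cos (2*Real.pi*((k'.1:ℝ)*x.1+(k'.2:ℝ)*x.2) + φ k')))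
      ≤ ∑ k ∈ T, (|q k| * |q k| + |q k| * |q (-k)|) := Finset.sum_le_sum hsum
    _ ≤ ∑ k ∈ T, ((q k)^2 + ((q k)^2 + (q (-k))^2)/2) := by
        refine Finset.sum_le_sum (fun k _ => ?_)
        have h1 : |q k| * |q k| = (q k)^2 := by rw [← abs_mul, abs_mul_self]; ring
        have h2 : |q k| * |q (-k)| ≤ ((q k)^2 + (q (-k))^2)/2 := by
          nlinarith [sq_nonneg (|q k| - |q (-k)|), sq_abs (q k), sq_abs (q (-k))]
        linarith
    _ = 2 * ∑ k ∈ T, (q k)^2 := by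
        have hneg : ∑ k ∈ T, (q (-k))^2 = ∑ k ∈ T, (q k)^2 :=
          Finset.sum_nbij' (fun k => -k) (fun k => -k) hT hT (by simp) (by simp)
            (fun a _ => rfl)
        rw [Finset.sum_add_distrib, ← Finset.sum_div, Finset.sum_add_distrib, hneg]
        ring
noncomputable def sratio (N : ℕ) (α : ℝ × ℝ) (k : ℤ × ℤ) : ℝ :=
  (Real.sin (Real.pi * (N : ℝ) * sfrac ((k.1 : ℝ) * α.1)) *
      Real.sin (Real.pi * (N : ℝ) * sfrac ((k.2 : ℝ) * α.2))) /
    ((N : ℝ) ^ ((1 : ℝ)/2) * Real.sin (Real.pi * sfrac ((k.1 : ℝ) * α.1)) *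
      Real.sin (Real.pi * sfrac ((k.2 : ℝ) * α.2)))

noncomputable def ph (N : ℕ) (α : ℝ × ℝ) (k : ℤ × ℤ) : ℝ :=
  Real.pi * ((N : ℝ) - 1) * (sfrac ((k.1 : ℝ) * α.1) + sfrac ((k.2 : ℝ) * α.2))

lemma psiterm_eq (N : ℕ) (x α : ℝ × ℝ) (k : ℤ × ℤ) :
    psiterm N x α k
      = Real.cos (2*Real.pi*((k.1:ℝ)*x.1+(k.2:ℝ)*x.2) + ph N α k) * sratio N α k := by
  unfold psiterm sratio ph
  rw [mul_div_assoc]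

noncomputable def qcoef (ε : ℝ) (N : ℕ) (c d : ℤ × ℤ → ℝ) (α : ℝ × ℝ) (k : ℤ × ℤ) : ℝ :=
  Set.indicator (Shat ε N α) (fun k' => (c k' - d k') * sratio N α k') k

lemma indicator_psiterm_eq (ε : ℝ) (N : ℕ) (c d : ℤ × ℤ → ℝ) (x α : ℝ × ℝ) (k : ℤ × ℤ) :
    Set.indicator (Shat ε N α) (fun k' => (c k' - d k') * psiterm N x α k') k
      = qcoef ε N c d α k * Real.cos (2*Real.pi*((k.1:ℝ)*x.1+(k.2:ℝ)*x.2) + ph N α k) := by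
  unfold qcoef
  by_cases h : k ∈ Shat ε N α
  · rw [Set.indicator_of_mem h, Set.indicator_of_mem h, psiterm_eq]; ring
  · rw [Set.indicator_of_notMem h, Set.indicator_of_notMem h, zero_mul]

lemma measurable_sfrac : Measurable sfrac := by
  unfold sfrac
  exact measurable_id.sub
    (measurable_from_top.comp (Int.measurable_ceil.comp (measurable_id.sub measurable_const)))

lemma measurable_distToInt : Measurable distToInt := by
  unfold distToInt
  have h : Measurable (fun t : ℝ => (round t : ℤ)) := by
    have : (fun t : ℝ => (round t : ℤ)) = fun t : ℝ => ⌊t + 1/2⌋ := funext (fun t => round_eq t)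
    rw [this]
    exact Int.measurable_floor.comp (measurable_id.add measurable_const)
  exact (measurable_id.sub (measurable_from_top.comp h)).abs

lemma measurable_sfrac_comp1 (k : ℤ × ℤ) : Measurable (fun α : ℝ × ℝ => sfrac ((k.1:ℝ) * α.1)) :=
  measurable_sfrac.comp (measurable_const.mul measurable_fst)

lemma measurable_sfrac_comp2 (k : ℤ × ℤ) : Measurable (fun α : ℝ × ℝ => sfrac ((k.2:ℝ) * α.2)) :=
  measurable_sfrac.comp (measurable_const.mul measurable_snd)

lemma measurable_sratio (N : ℕ) (k : ℤ × ℤ) : Measurable (fun α : ℝ × ℝ => sratio N α k) := by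
  unfold sratio
  refine Measurable.div ?_ ?_
  · exact (Real.measurable_sin.comp (measurable_const.mul (measurable_sfrac_comp1 k))).mul
      (Real.measurable_sin.comp (measurable_const.mul (measurable_sfrac_comp2 k)))
  · exact ((measurable_const.mul
        (Real.measurable_sin.comp (measurable_const.mul (measurable_sfrac_comp1 k)))).mul
      (Real.measurable_sin.comp (measurable_const.mul (measurable_sfrac_comp2 k))))

lemma measurable_ph (N : ℕ) (k : ℤ × ℤ) : Measurable (fun α : ℝ × ℝ => ph N α k) := by
  unfold ph
  exact measurable_const.mul ((measurable_sfrac_comp1 k).add (measurable_sfrac_comp2 k))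

lemma measurableSet_shat (ε : ℝ) (N : ℕ) (k : ℤ × ℤ) :
    MeasurableSet {α : ℝ × ℝ | k ∈ Shat ε N α} := by
  have : {α : ℝ × ℝ | k ∈ Shat ε N α}
      = ({α : ℝ × ℝ | ε ^ 3 * (N : ℝ) < (|k.1| : ℝ)} ∩
        ({α : ℝ × ℝ | ε ^ 3 * (N : ℝ) < (|k.2| : ℝ)} ∩
        ({α : ℝ × ℝ | (|k.1| : ℝ) < (N : ℝ) / ε} ∩
        ({α : ℝ × ℝ | (|k.2| : ℝ) < (N : ℝ) / ε} ∩
        ({α : ℝ × ℝ | (|k.1| : ℝ) ^ ((3 : ℝ)/4) * |sfrac ((k.1 : ℝ) * α.1)|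
            < ε ^ (-(2 : ℝ)) * (N : ℝ) ^ (-(1 : ℝ)/4)} ∩
         {α : ℝ × ℝ | (|k.2| : ℝ) ^ ((3 : ℝ)/4) * |sfrac ((k.2 : ℝ) * α.2)|
            < ε ^ (-(2 : ℝ)) * (N : ℝ) ^ (-(1 : ℝ)/4)}))))) := by
    ext α
    simp only [Shat, Set.mem_setOf_eq, Set.mem_inter_iff]
  rw [this]
  refine (MeasurableSet.const _).inter ((MeasurableSet.const _).inter
    ((MeasurableSet.const _).inter ((MeasurableSet.const _).inter (MeasurableSet.inter ?_ ?_))))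
  · exact measurableSet_lt (measurable_const.mul (measurable_sfrac_comp1 k).abs) measurable_const
  · exact measurableSet_lt (measurable_const.mul (measurable_sfrac_comp2 k).abs) measurable_const

lemma measurableSet_badSet (ε : ℝ) (N : ℕ) : MeasurableSet (badSet ε N) := by
  unfold badSet
  rw [Set.setOf_exists]
  refine MeasurableSet.iUnion (fun n => ?_)
  simp only [Set.setOf_and, Set.setOf_or]
  refine (MeasurableSet.const _).inter ((MeasurableSet.const _).inter (MeasurableSet.union ?_ ?_))
  · exact measurableSet_lt (measurable_const.mul
      (measurable_distToInt.comp (measurable_const.mul measurable_fst))) measurable_const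
  · exact measurableSet_lt (measurable_const.mul
      (measurable_distToInt.comp (measurable_const.mul measurable_snd))) measurable_const

lemma measurable_qcoef (ε : ℝ) (N : ℕ) (c d : ℤ × ℤ → ℝ) (k : ℤ × ℤ) :
    Measurable (fun α : ℝ × ℝ => qcoef ε N c d α k) := by
  have : (fun α : ℝ × ℝ => qcoef ε N c d α k)
      = Set.indicator {α : ℝ × ℝ | k ∈ Shat ε N α}
          (fun α => (c k - d k) * sratio N α k) := by
    funext α
    unfold qcoef
    by_cases h : k ∈ Shat ε N α
    · rw [Set.indicator_of_mem h, Set.indicator_of_mem (by exact h)]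
    · rw [Set.indicator_of_notMem h, Set.indicator_of_notMem (by exact h)]
  rw [this]
  exact (measurable_const.mul (measurable_sratio N k)).indicator (measurableSet_shat ε N k)
lemma comp_lower {ε : ℝ} (hε0 : 0 < ε) {N : ℕ} (hN : 1 ≤ N)
    {j : ℤ} {a : ℝ}
    (hj1 : ε ^ 3 * (N:ℝ) < |(j:ℝ)|) (hj2 : |(j:ℝ)| < (N:ℝ)/ε)
    (hbad : ∀ n : ℕ, 1 ≤ n → (n:ℝ) ≤ (N:ℝ)/ε →
      ε ^ ((1:ℝ)/2) * (N:ℝ) ^ (-(1:ℝ)/4) ≤ (n:ℝ) ^ ((3:ℝ)/4) * distToInt ((n:ℝ)*a)) :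
    ε ^ ((1:ℝ)/2) * (N:ℝ) ^ (-(1:ℝ)/4) / |(j:ℝ)| ^ ((3:ℝ)/4) ≤ |sfrac ((j:ℝ)*a)| := by
  have hNpos : (0:ℝ) < N := by exact_mod_cast Nat.lt_of_lt_of_le Nat.zero_lt_one hN
  have hjpos : (0:ℝ) < |(j:ℝ)| := lt_trans (by positivity) hj1
  have hj0 : j ≠ 0 := by
    intro h
    rw [h] at hjpos
    simp at hjpos
  set n : ℕ := j.natAbs with hndef
  have hn1 : 1 ≤ n := Int.natAbs_pos.mpr hj0
  have hc1 : ((n : ℕ) : ℝ) = |(j:ℝ)| := by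
    rw [hndef, Nat.cast_natAbs, Int.cast_abs]
  have hb := hbad n hn1 (by rw [hc1]; exact hj2.le)
  have hd : distToInt ((n:ℝ)*a) = |sfrac ((j:ℝ)*a)| := by
    rcases abs_cases (j:ℝ) with ⟨h, _⟩ | ⟨h, _⟩
    · rw [hc1, h, abs_sfrac_eq_distToInt]
    · rw [hc1, h, neg_mul, distToInt_neg, abs_sfrac_eq_distToInt]
  rw [hd, hc1] at hb
  rw [div_le_iff₀ (by positivity)]
  calc ε ^ ((1:ℝ)/2) * (N:ℝ) ^ (-(1:ℝ)/4)
      ≤ |(j:ℝ)| ^ ((3:ℝ)/4) * |sfrac ((j:ℝ)*a)| := hb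
    _ = |sfrac ((j:ℝ)*a)| * |(j:ℝ)| ^ ((3:ℝ)/4) := by ring

lemma qcoef_bound {K ε : ℝ} (hK : 0 < K) (hε0 : 0 < ε) (hε1 : ε < 1) {N : ℕ} (hN : 1 ≤ N)
    {c d : ℤ × ℤ → ℝ}
    (hcd : ∀ k : ℤ × ℤ, k.1 * k.2 ≠ 0 → |c k - d k| ≤ K * knorm k ^ (-(5:ℝ)/2))
    {α : ℝ × ℝ} (hα : α ∉ badSet ε N) (k : ℤ × ℤ) :
    |qcoef ε N c d α k| ≤ K / (4 * ε^4 * N) := by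
  have hNpos : (0:ℝ) < N := by exact_mod_cast Nat.lt_of_lt_of_le Nat.zero_lt_one hN
  by_cases hk : k ∈ Shat ε N α
  swap
  · rw [qcoef, Set.indicator_of_notMem hk, abs_zero]
    positivity
  have hkmem := hk
  obtain ⟨h1, h2, h3, h4, h5, h6⟩ := hk
  have hk1 : k.1 ≠ 0 := by
    intro h
    rw [h] at h1
    simp at h1
    nlinarith [hNpos, pow_pos hε0 3]
  have hk2 : k.2 ≠ 0 := by
    intro h
    rw [h] at h2
    simp at h2
    nlinarith [hNpos, pow_pos hε0 3]
  simp only [badSet, Set.mem_setOf_eq, not_exists] at hα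
  push_neg at hα
  have hα' : ∀ n : ℕ, 1 ≤ n → (n:ℝ) ≤ (N:ℝ)/ε →
      (ε ^ ((1:ℝ)/2) * (N:ℝ) ^ (-(1:ℝ)/4) ≤ (n:ℝ) ^ ((3:ℝ)/4) * distToInt ((n:ℝ)*α.1) ∧
       ε ^ ((1:ℝ)/2) * (N:ℝ) ^ (-(1:ℝ)/4) ≤ (n:ℝ) ^ ((3:ℝ)/4) * distToInt ((n:ℝ)*α.2)) := by
    intro n hn hle
    exact hα n hn hle
  have hs1 := comp_lower hε0 hN h1 h3 (fun n a b => (hα' n a b).1)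
  have hs2 := comp_lower hε0 hN h2 h4 (fun n a b => (hα' n a b).2)
  set A : ℝ := ε ^ ((1:ℝ)/2) * (N:ℝ) ^ (-(1:ℝ)/4) with hAdef
  set m1 : ℝ := |((k.1:ℤ):ℝ)| with hm1def
  set m2 : ℝ := |((k.2:ℤ):ℝ)| with hm2def
  have hm1pos : 0 < m1 := lt_trans (by positivity) h1
  have hm2pos : 0 < m2 := lt_trans (by positivity) h2
  have hApos : 0 < A := by rw [hAdef]; positivity
  have hsin1 : 2 * (A / m1 ^ ((3:ℝ)/4)) ≤ |Real.sin (Real.pi * sfrac ((k.1:ℝ)*α.1))| := by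
    calc 2 * (A / m1 ^ ((3:ℝ)/4)) ≤ 2 * |sfrac ((k.1:ℝ)*α.1)| := by linarith [hs1]
      _ ≤ |Real.sin (Real.pi * sfrac ((k.1:ℝ)*α.1))| := two_abs_le_abs_sin (abs_sfrac_le _)
  have hsin2 : 2 * (A / m2 ^ ((3:ℝ)/4)) ≤ |Real.sin (Real.pi * sfrac ((k.2:ℝ)*α.2))| := by
    calc 2 * (A / m2 ^ ((3:ℝ)/4)) ≤ 2 * |sfrac ((k.2:ℝ)*α.2)| := by linarith [hs2]
      _ ≤ |Real.sin (Real.pi * sfrac ((k.2:ℝ)*α.2))| := two_abs_le_abs_sin (abs_sfrac_le _)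
  have hX1pos : 0 < 2 * (A / m1 ^ ((3:ℝ)/4)) := by positivity
  have hX2pos : 0 < 2 * (A / m2 ^ ((3:ℝ)/4)) := by positivity
  have hratio : |sratio N α k| ≤ m1 ^ ((3:ℝ)/4) * m2 ^ ((3:ℝ)/4) / (4*ε) := by
    have habs : |sratio N α k| =
        (|Real.sin (Real.pi * (N:ℝ) * sfrac ((k.1:ℝ)*α.1))| *
          |Real.sin (Real.pi * (N:ℝ) * sfrac ((k.2:ℝ)*α.2))|) /
        ((N:ℝ) ^ ((1:ℝ)/2) * |Real.sin (Real.pi * sfrac ((k.1:ℝ)*α.1))| *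
          |Real.sin (Real.pi * sfrac ((k.2:ℝ)*α.2))|) := by
      rw [sratio, abs_div, abs_mul, abs_mul, abs_mul,
        abs_of_nonneg (Real.rpow_nonneg hNpos.le _)]
    rw [habs]
    have hD0pos : 0 < (N:ℝ) ^ ((1:ℝ)/2) * (2 * (A / m1 ^ ((3:ℝ)/4))) * (2 * (A / m2 ^ ((3:ℝ)/4))) := by
      positivity
    have step : (|Real.sin (Real.pi * (N:ℝ) * sfrac ((k.1:ℝ)*α.1))| *
          |Real.sin (Real.pi * (N:ℝ) * sfrac ((k.2:ℝ)*α.2))|) /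
        ((N:ℝ) ^ ((1:ℝ)/2) * |Real.sin (Real.pi * sfrac ((k.1:ℝ)*α.1))| *
          |Real.sin (Real.pi * sfrac ((k.2:ℝ)*α.2))|)
        ≤ 1 / ((N:ℝ) ^ ((1:ℝ)/2) * (2 * (A / m1 ^ ((3:ℝ)/4))) * (2 * (A / m2 ^ ((3:ℝ)/4)))) := by
      refine div_le_div₀ zero_le_one ?_ hD0pos ?_
      · exact mul_le_one₀ (Real.abs_sin_le_one _) (abs_nonneg _) (Real.abs_sin_le_one _)
      · refine mul_le_mul ?_ hsin2 hX2pos.le (by positivity)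
        exact mul_le_mul_of_nonneg_left hsin1 (Real.rpow_nonneg hNpos.le _)
    refine le_trans step ?_
    have hA2 : (N:ℝ) ^ ((1:ℝ)/2) * (A*A) = ε := by
      have e1 : ε ^ ((1:ℝ)/2) * ε ^ ((1:ℝ)/2) = ε := by
        rw [← Real.rpow_add hε0]; norm_num
      have e2 : (N:ℝ) ^ ((1:ℝ)/2) * ((N:ℝ) ^ (-(1:ℝ)/4) * (N:ℝ) ^ (-(1:ℝ)/4)) = 1 := by
        rw [← Real.rpow_add hNpos, ← Real.rpow_add hNpos]; norm_num
      calc (N:ℝ) ^ ((1:ℝ)/2) * (A*A)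
          = (ε ^ ((1:ℝ)/2) * ε ^ ((1:ℝ)/2)) *
            ((N:ℝ) ^ ((1:ℝ)/2) * ((N:ℝ) ^ (-(1:ℝ)/4) * (N:ℝ) ^ (-(1:ℝ)/4))) := by
            rw [hAdef]; ring
        _ = ε := by rw [e1, e2, mul_one]
    have hD0eq : (N:ℝ) ^ ((1:ℝ)/2) * (2 * (A / m1 ^ ((3:ℝ)/4))) * (2 * (A / m2 ^ ((3:ℝ)/4)))
        = 4*ε / (m1 ^ ((3:ℝ)/4) * m2 ^ ((3:ℝ)/4)) := by
      rw [eq_div_iff (by positivity)]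
      have expand : (N:ℝ) ^ ((1:ℝ)/2) * (2 * (A / m1 ^ ((3:ℝ)/4))) * (2 * (A / m2 ^ ((3:ℝ)/4)))
          * (m1 ^ ((3:ℝ)/4) * m2 ^ ((3:ℝ)/4)) = 4 * ((N:ℝ) ^ ((1:ℝ)/2) * (A*A)) := by
        field_simp
        ring
      rw [expand, hA2]
    rw [hD0eq, one_div_div]
  have hm1norm : m1 ≤ knorm k := by
    rw [knorm]
    have : m1 = Real.sqrt ((k.1:ℝ)^2) := by
      rw [Real.sqrt_sq_eq_abs, hm1def]
    rw [this]
    exact Real.sqrt_le_sqrt (le_add_of_nonneg_right (sq_nonneg _))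
  have hm2norm : m2 ≤ knorm k := by
    rw [knorm]
    have : m2 = Real.sqrt ((k.2:ℝ)^2) := by
      rw [Real.sqrt_sq_eq_abs, hm2def]
    rw [this]
    exact Real.sqrt_le_sqrt (le_add_of_nonneg_left (sq_nonneg _))
  have hknormpos : 0 < knorm k := lt_of_lt_of_le hm1pos hm1norm
  have hcomb : knorm k ^ (-(5:ℝ)/2) * (m1 ^ ((3:ℝ)/4) * m2 ^ ((3:ℝ)/4)) ≤ (ε^3*N)⁻¹ := by
    have hc1 : m1 ^ ((3:ℝ)/4) ≤ knorm k ^ ((3:ℝ)/4) :=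
      Real.rpow_le_rpow hm1pos.le hm1norm (by norm_num)
    have hc2 : m2 ^ ((3:ℝ)/4) ≤ knorm k ^ ((3:ℝ)/4) :=
      Real.rpow_le_rpow hm2pos.le hm2norm (by norm_num)
    calc knorm k ^ (-(5:ℝ)/2) * (m1 ^ ((3:ℝ)/4) * m2 ^ ((3:ℝ)/4))
        ≤ knorm k ^ (-(5:ℝ)/2) * (knorm k ^ ((3:ℝ)/4) * knorm k ^ ((3:ℝ)/4)) := by
          refine mul_le_mul_of_nonneg_left ?_ (Real.rpow_nonneg hknormpos.le _)
          exact mul_le_mul hc1 hc2 (Real.rpow_nonneg hm2pos.le _) (Real.rpow_nonneg hknormpos.le _)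
      _ = knorm k ^ (-(1:ℝ)) := by
          rw [← Real.rpow_add hknormpos, ← Real.rpow_add hknormpos]; norm_num
      _ = (knorm k)⁻¹ := Real.rpow_neg_one _
      _ ≤ (ε^3*N)⁻¹ := by
          refine inv_anti₀ (by positivity) ?_
          exact le_trans h1.le (le_trans hm1norm (le_refl _))
  have hfinal : |qcoef ε N c d α k| = |c k - d k| * |sratio N α k| := by
    rw [qcoef, Set.indicator_of_mem hkmem, abs_mul]
  rw [hfinal]
  calc |c k - d k| * |sratio N α k|
      ≤ (K * knorm k ^ (-(5:ℝ)/2)) * (m1 ^ ((3:ℝ)/4) * m2 ^ ((3:ℝ)/4) / (4*ε)) := by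
        refine mul_le_mul (hcd k (mul_ne_zero hk1 hk2)) hratio (abs_nonneg _) ?_
        positivity
    _ = K/(4*ε) * (knorm k ^ (-(5:ℝ)/2) * (m1 ^ ((3:ℝ)/4) * m2 ^ ((3:ℝ)/4))) := by ring
    _ ≤ K/(4*ε) * (ε^3*N)⁻¹ := by
        refine mul_le_mul_of_nonneg_left hcomb (by positivity)
    _ = K / (4 * ε^4 * N) := by
        rw [div_mul_eq_mul_div, div_eq_div_iff (by positivity) (by positivity)]
        field_simp

lemma small_aux {ε : ℝ} (hε0 : 0 < ε) (hε1 : ε < 1) {N : ℕ} (hN : 1 ≤ N) {j : ℤ} {a : ℝ}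
    (h1 : ε ^ 3 * (N:ℝ) < |(j:ℝ)|)
    (h5 : |(j:ℝ)| ^ ((3:ℝ)/4) * |sfrac ((j:ℝ)*a)| < ε ^ (-(2:ℝ)) * (N:ℝ) ^ (-(1:ℝ)/4)) :
    |sfrac ((j:ℝ)*a)| < 1/(ε^5*N) := by
  have hNpos : (0:ℝ) < N := by exact_mod_cast Nat.lt_of_lt_of_le Nat.zero_lt_one hN
  set m : ℝ := |(j:ℝ)| with hmdef
  have hmpos : 0 < m := lt_trans (by positivity) h1
  have hm34pos : 0 < m ^ ((3:ℝ)/4) := Real.rpow_pos_of_pos hmpos _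
  have hs : |sfrac ((j:ℝ)*a)| < ε ^ (-(2:ℝ)) * (N:ℝ) ^ (-(1:ℝ)/4) / m ^ ((3:ℝ)/4) := by
    rw [lt_div_iff₀ hm34pos]
    calc |sfrac ((j:ℝ)*a)| * m ^ ((3:ℝ)/4) = m ^ ((3:ℝ)/4) * |sfrac ((j:ℝ)*a)| := by ring
      _ < ε ^ (-(2:ℝ)) * (N:ℝ) ^ (-(1:ℝ)/4) := h5
  refine lt_of_lt_of_le hs ?_
  have hm34 : ε ^ ((9:ℝ)/4) * (N:ℝ) ^ ((3:ℝ)/4) ≤ m ^ ((3:ℝ)/4) := by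
    have h0 : (ε^3*(N:ℝ)) ^ ((3:ℝ)/4) ≤ m ^ ((3:ℝ)/4) :=
      Real.rpow_le_rpow (by positivity) h1.le (by norm_num)
    calc ε ^ ((9:ℝ)/4) * (N:ℝ) ^ ((3:ℝ)/4) = (ε^3*(N:ℝ)) ^ ((3:ℝ)/4) := by
          rw [Real.mul_rpow (by positivity) hNpos.le]
          congr 1
          rw [← Real.rpow_natCast ε 3, ← Real.rpow_mul hε0.le]
          norm_num
      _ ≤ m ^ ((3:ℝ)/4) := h0
  calc ε ^ (-(2:ℝ)) * (N:ℝ) ^ (-(1:ℝ)/4) / m ^ ((3:ℝ)/4)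
      ≤ ε ^ (-(2:ℝ)) * (N:ℝ) ^ (-(1:ℝ)/4) / (ε ^ ((9:ℝ)/4) * (N:ℝ) ^ ((3:ℝ)/4)) := by
        refine div_le_div_of_nonneg_left (by positivity) (by positivity) hm34
    _ ≤ 1/(ε^5*N) := by
        rw [div_le_div_iff₀ (by positivity) (by positivity)]
        have e1 : ε ^ (-(2:ℝ)) * ε^5 = ε ^ (3:ℝ) := by
          rw [← Real.rpow_natCast ε 5, ← Real.rpow_add hε0]; norm_num
        have e2 : (N:ℝ) ^ (-(1:ℝ)/4) * (N:ℝ) ^ (1:ℝ) = (N:ℝ) ^ ((3:ℝ)/4) := by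
          rw [← Real.rpow_add hNpos]; norm_num
        calc ε ^ (-(2:ℝ)) * (N:ℝ) ^ (-(1:ℝ)/4) * (ε^5*N)
            = (ε ^ (-(2:ℝ)) * ε^5) * ((N:ℝ) ^ (-(1:ℝ)/4) * (N:ℝ) ^ (1:ℝ)) := by
              rw [Real.rpow_one]; ring
          _ = ε ^ (3:ℝ) * (N:ℝ) ^ ((3:ℝ)/4) := by rw [e1, e2]
          _ ≤ ε ^ ((9:ℝ)/4) * (N:ℝ) ^ ((3:ℝ)/4) := by
              refine mul_le_mul_of_nonneg_right ?_ (Real.rpow_nonneg hNpos.le _)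
              exact Real.rpow_le_rpow_of_exponent_ge hε0 hε1.le (by norm_num)
          _ = 1 * (ε ^ ((9:ℝ)/4) * (N:ℝ) ^ ((3:ℝ)/4)) := by ring

lemma shat_small {ε : ℝ} (hε0 : 0 < ε) (hε1 : ε < 1) {N : ℕ} (hN : 1 ≤ N) {α : ℝ × ℝ}
    {k : ℤ × ℤ} (hk : k ∈ Shat ε N α) :
    |sfrac ((k.1:ℝ)*α.1)| < 1/(ε^5*N) ∧ |sfrac ((k.2:ℝ)*α.2)| < 1/(ε^5*N) := by
  obtain ⟨h1, h2, h3, h4, h5, h6⟩ := hk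
  exact ⟨small_aux hε0 hε1 hN h1 h5, small_aux hε0 hε1 hN h2 h6⟩
lemma vol_cover {j : ℤ} (hj : j ≠ 0) {δ : ℝ} (hδ : 0 < δ) :
    volume {a : ℝ | a ∈ Set.Ioc (0:ℝ) 1 ∧ |sfrac ((j:ℝ)*a)| < δ}
      ≤ ENNReal.ofReal (6*δ) := by
  set n : ℕ := j.natAbs with hndef
  have hn1 : 1 ≤ n := Int.natAbs_pos.mpr hj
  have hnR : (1:ℝ) ≤ (n:ℝ) := by exact_mod_cast hn1
  have hjcast : |(j:ℝ)| = (n:ℝ) := by rw [hndef, Nat.cast_natAbs, Int.cast_abs]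
  have hsub : {a : ℝ | a ∈ Set.Ioc (0:ℝ) 1 ∧ |sfrac ((j:ℝ)*a)| < δ}
      ⊆ ⋃ m ∈ Finset.Icc (-(n:ℤ)) (n:ℤ), Metric.ball ((m:ℝ)/(j:ℝ)) (δ/n) := by
    intro a ⟨ha, hs⟩
    set r : ℤ := round ((j:ℝ)*a) with hrdef
    have hdist : |(j:ℝ)*a - r| < δ := by
      have := distToInt_le ((j:ℝ)*a) r
      rw [← abs_sfrac_eq_distToInt] at this
      calc |(j:ℝ)*a - r| = distToInt ((j:ℝ)*a) := rfl
        _ = |sfrac ((j:ℝ)*a)| := (abs_sfrac_eq_distToInt _).symm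
        _ < δ := hs
    have hta : |(j:ℝ)*a| ≤ (n:ℝ) := by
      rw [abs_mul, hjcast]
      calc (n:ℝ) * |a| ≤ (n:ℝ) * 1 := by
            refine mul_le_mul_of_nonneg_left ?_ (by positivity)
            rw [abs_of_pos ha.1]; exact ha.2
        _ = (n:ℝ) := mul_one _
    have hrle : |(r:ℝ)| ≤ (n:ℝ) + 1/2 := by
      have h1 : |(r:ℝ)| ≤ |(j:ℝ)*a| + |(j:ℝ)*a - r| := by
        have := abs_sub_abs_le_abs_sub ((j:ℝ)*a) (r:ℝ)
        have h2 := abs_sub_le ((r:ℝ)) ((j:ℝ)*a) 0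
        simp only [sub_zero] at h2
        calc |(r:ℝ)| ≤ |(r:ℝ) - (j:ℝ)*a| + |(j:ℝ)*a| := h2
          _ = |(j:ℝ)*a| + |(j:ℝ)*a - r| := by rw [abs_sub_comm]; ring
      have h3 : |(j:ℝ)*a - r| ≤ 1/2 := abs_sub_round _
      linarith
    have hrmem : r ∈ Finset.Icc (-(n:ℤ)) (n:ℤ) := by
      rw [Finset.mem_Icc]
      have hR : |(r:ℝ)| < ((n:ℤ):ℝ) + 1 := by push_cast; linarith
      have hint : |r| < (n:ℤ) + 1 := by exact_mod_cast hR
      obtain ⟨hl, hr⟩ := abs_lt.mp hint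
      exact ⟨by omega, by omega⟩
    refine Set.mem_biUnion hrmem ?_
    rw [Metric.mem_ball, Real.dist_eq]
    have hjne : (j:ℝ) ≠ 0 := Int.cast_ne_zero.mpr hj
    have : a - (r:ℝ)/(j:ℝ) = ((j:ℝ)*a - r)/(j:ℝ) := by field_simp
    rw [this, abs_div, hjcast]
    rw [div_lt_div_iff₀ (by linarith) (by linarith)]
    calc |(j:ℝ)*a - r| * n = n * |(j:ℝ)*a - r| := by ring
      _ < n * δ := by
          refine mul_lt_mul_of_pos_left hdist (by linarith)
      _ = δ * n := by ring
  calc volume {a : ℝ | a ∈ Set.Ioc (0:ℝ) 1 ∧ |sfrac ((j:ℝ)*a)| < δ}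
      ≤ volume (⋃ m ∈ Finset.Icc (-(n:ℤ)) (n:ℤ), Metric.ball ((m:ℝ)/(j:ℝ)) (δ/n)) :=
        measure_mono hsub
    _ ≤ ∑ m ∈ Finset.Icc (-(n:ℤ)) (n:ℤ), volume (Metric.ball ((m:ℝ)/(j:ℝ)) (δ/n)) :=
        measure_biUnion_finset_le _ _
    _ = ∑ m ∈ Finset.Icc (-(n:ℤ)) (n:ℤ), ENNReal.ofReal (2*(δ/n)) := by
        refine Finset.sum_congr rfl (fun m _ => Real.volume_ball _ _)
    _ = ((Finset.Icc (-(n:ℤ)) (n:ℤ)).card : ENNReal) * ENNReal.ofReal (2*(δ/n)) := by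
        rw [Finset.sum_const, nsmul_eq_mul]
    _ ≤ ENNReal.ofReal (6*δ) := by
        have hcard : (Finset.Icc (-(n:ℤ)) (n:ℤ)).card = 2*n+1 := by
          rw [Int.card_Icc]; omega
        rw [hcard]
        rw [show ((2*n+1 : ℕ) : ENNReal) = ENNReal.ofReal ((2*n+1 : ℕ) : ℝ) from
          (ENNReal.ofReal_natCast _).symm]
        rw [← ENNReal.ofReal_mul (by positivity)]
        refine ENNReal.ofReal_le_ofReal ?_
        have hnpos : (0:ℝ) < n := by linarith
        push_cast
        have heq : ((2*(n:ℝ)+1)) * (2*(δ/(n:ℝ))) = (4*(n:ℝ)+2)*δ/(n:ℝ) := by ring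
        rw [heq, div_le_iff₀ hnpos]
        nlinarith [hδ.le, hnR]
lemma meas_shatset {ε : ℝ} (hε0 : 0 < ε) (hε1 : ε < 1) {N : ℕ} (hN : 1 ≤ N) (k : ℤ × ℤ)
    (hk1 : k.1 ≠ 0) (hk2 : k.2 ≠ 0) :
    volume ({α : ℝ × ℝ | k ∈ Shat ε N α} ∩ unitCell)
      ≤ ENNReal.ofReal (6*(1/(ε^5*N))) * ENNReal.ofReal (6*(1/(ε^5*N))) := by
  set δ : ℝ := 1/(ε^5*N) with hδdef
  have hNpos : (0:ℝ) < N := by exact_mod_cast Nat.lt_of_lt_of_le Nat.zero_lt_one hN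
  have hδpos : 0 < δ := by rw [hδdef]; positivity
  have hsub : {α : ℝ × ℝ | k ∈ Shat ε N α} ∩ unitCell
      ⊆ {a : ℝ | a ∈ Set.Ioc (0:ℝ) 1 ∧ |sfrac ((k.1:ℝ)*a)| < δ} ×ˢ
        {a : ℝ | a ∈ Set.Ioc (0:ℝ) 1 ∧ |sfrac ((k.2:ℝ)*a)| < δ} := by
    rintro α ⟨hα, hcell⟩
    obtain ⟨hc1, hc2⟩ := hcell
    obtain ⟨hs1, hs2⟩ := shat_small hε0 hε1 hN hα
    exact ⟨⟨hc1, hs1⟩, ⟨hc2, hs2⟩⟩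
  calc volume ({α : ℝ × ℝ | k ∈ Shat ε N α} ∩ unitCell)
      ≤ volume ({a : ℝ | a ∈ Set.Ioc (0:ℝ) 1 ∧ |sfrac ((k.1:ℝ)*a)| < δ} ×ˢ
        {a : ℝ | a ∈ Set.Ioc (0:ℝ) 1 ∧ |sfrac ((k.2:ℝ)*a)| < δ}) := measure_mono hsub
    _ = volume {a : ℝ | a ∈ Set.Ioc (0:ℝ) 1 ∧ |sfrac ((k.1:ℝ)*a)| < δ} *
        volume {a : ℝ | a ∈ Set.Ioc (0:ℝ) 1 ∧ |sfrac ((k.2:ℝ)*a)| < δ} := by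
        rw [show (volume : Measure (ℝ × ℝ)) = (volume : Measure ℝ).prod volume from
          Measure.volume_eq_prod ℝ ℝ]
        exact Measure.prod_prod _ _
    _ ≤ ENNReal.ofReal (6*δ) * ENNReal.ofReal (6*δ) :=
        mul_le_mul' (vol_cover hk1 hδpos) (vol_cover hk2 hδpos)
lemma measurableSet_unitCell : MeasurableSet unitCell :=
  measurableSet_Ioc.prod measurableSet_Ioc

/-- Let `(c_k)` and `(d_k)` satisfy `|c_k - d_k| ≤ K|k|^{-5/2}` for `k₁k₂ ≠ 0`, and fix
`ε ∈ (0,1)`.  Then there is a constant `C = C(K,ε)` such that for all `N ≥ 1`,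
`‖ Σ_{k ∈ Ŝ(N,α)} (c_k - d_k) ψ_k ‖²_{L²(𝕋² × (𝕋² ∖ E_N(ε)))} ≤ C·N⁻¹`. -/
theorem stmt12 (K : ℝ) (hK : 0 < K) (ε : ℝ) (hε : ε ∈ Set.Ioo (0 : ℝ) 1) :
    ∃ C : ℝ, 0 < C ∧
      ∀ c d : ℤ × ℤ → ℝ,
        (∀ k : ℤ × ℤ, k.1 * k.2 ≠ 0 → |c k - d k| ≤ K * knorm k ^ (-(5 : ℝ)/2)) →
        ∀ N : ℕ, 1 ≤ N →
          (∫ p : (ℝ × ℝ) × (ℝ × ℝ),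
              (∑' k : ℤ × ℤ,
                Set.indicator (Shat ε N p.2)
                  (fun k' => (c k' - d k') * psiterm N p.1 p.2 k') k) ^ 2
              ∂(μE ε N))
            ≤ C / N := by
  obtain ⟨hε0, hε1⟩ := hε
  refine ⟨113 * K^2 / ε^20 + 1, by positivity, ?_⟩
  intro c d hcd N hN
  have hNpos : (0:ℝ) < N := by exact_mod_cast Nat.lt_of_lt_of_le Nat.zero_lt_one hN
  have hN1R : (1:ℝ) ≤ N := by exact_mod_cast hN
  set D : Set (ℝ × ℝ) := unitCell \ badSet ε N with hDdef
  have hDmeas : MeasurableSet D := measurableSet_unitCell.diff (measurableSet_badSet ε N)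
  haveI hfinD : IsFiniteMeasure (volume.restrict D) := by
    refine ⟨?_⟩
    rw [Measure.restrict_apply_univ]
    exact lt_of_le_of_lt (measure_mono Set.diff_subset)
      (by rw [volume_unitCell]; exact ENNReal.one_lt_top)
  set M : ℕ := ⌈(N:ℝ)/ε⌉₊ with hMdef
  set T : Finset (ℤ × ℤ) := Finset.Icc (-(M:ℤ)) (M:ℤ) ×ˢ Finset.Icc (-(M:ℤ)) (M:ℤ) with hTdef
  have hTsym : ∀ k ∈ T, -k ∈ T := by
    intro k hk
    simp only [hTdef, Finset.mem_product, Finset.mem_Icc, Prod.fst_neg, Prod.snd_neg] at hk ⊢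
    omega
  have hShatT : ∀ (α : ℝ × ℝ) (k : ℤ × ℤ), k ∈ Shat ε N α → k ∈ T := by
    intro α k hk
    obtain ⟨h1, h2, h3, h4, _, _⟩ := hk
    have hle : (N:ℝ)/ε ≤ (M:ℝ) := Nat.le_ceil _
    have e1 : |(k.1:ℝ)| ≤ (M:ℝ) := le_trans h3.le hle
    have e2 : |(k.2:ℝ)| ≤ (M:ℝ) := le_trans h4.le hle
    have i1 : (|k.1| : ℤ) ≤ (M:ℤ) := by
      rw [← Int.cast_abs] at e1; exact_mod_cast e1
    have i2 : (|k.2| : ℤ) ≤ (M:ℤ) := by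
      rw [← Int.cast_abs] at e2; exact_mod_cast e2
    obtain ⟨l1, r1⟩ := abs_le.mp i1
    obtain ⟨l2, r2⟩ := abs_le.mp i2
    simp only [hTdef, Finset.mem_product, Finset.mem_Icc]
    exact ⟨⟨l1, r1⟩, ⟨l2, r2⟩⟩
  have htsum : ∀ p : (ℝ × ℝ) × (ℝ × ℝ),
      (∑' k : ℤ × ℤ, Set.indicator (Shat ε N p.2)
        (fun k' => (c k' - d k') * psiterm N p.1 p.2 k') k)
      = ∑ k ∈ T, qcoef ε N c d p.2 k *
          Real.cos (2*Real.pi*((k.1:ℝ)*p.1.1+(k.2:ℝ)*p.1.2) + ph N p.2 k) := by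
    intro p
    rw [tsum_eq_sum (s := T) (fun k hk => Set.indicator_of_notMem
      (fun hmem => hk (hShatT p.2 k hmem)) _)]
    exact Finset.sum_congr rfl (fun k _ => indicator_psiterm_eq ε N c d p.1 p.2 k)
  simp only [htsum]
  set Qb : ℝ := K/(4*ε^4*N) with hQbdef
  have hQb0 : 0 ≤ Qb := by rw [hQbdef]; positivity
  -- measurability of the integrand
  have hmk : ∀ k : ℤ × ℤ, Measurable (fun p : (ℝ × ℝ) × (ℝ × ℝ) =>
      qcoef ε N c d p.2 k *
        Real.cos (2*Real.pi*((k.1:ℝ)*p.1.1+(k.2:ℝ)*p.1.2) + ph N p.2 k)) := by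
    intro k
    refine ((measurable_qcoef ε N c d k).comp measurable_snd).mul ?_
    refine Real.measurable_cos.comp ?_
    exact (measurable_const.mul ((measurable_const.mul measurable_fst.fst).add
      (measurable_const.mul measurable_fst.snd))).add ((measurable_ph N k).comp measurable_snd)
  have hGmeas : Measurable (fun p : (ℝ × ℝ) × (ℝ × ℝ) =>
      (∑ k ∈ T, qcoef ε N c d p.2 k *
        Real.cos (2*Real.pi*((k.1:ℝ)*p.1.1+(k.2:ℝ)*p.1.2) + ph N p.2 k))^2) :=
    (Finset.measurable_sum T (fun k _ => hmk k)).pow_const 2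
  -- a.e. bound on the μE
  have hμE : μE ε N = (volume.restrict unitCell).prod (volume.restrict D) := rfl
  have hae2 : ∀ᵐ p : (ℝ × ℝ) × (ℝ × ℝ) ∂(μE ε N), p.2 ∈ D := by
    rw [ae_iff]
    have hset : {p : (ℝ × ℝ) × (ℝ × ℝ) | ¬ p.2 ∈ D} = (Set.univ : Set (ℝ × ℝ)) ×ˢ Dᶜ := by
      ext p; simp
    rw [hset, hμE, Measure.prod_prod, Measure.restrict_apply hDmeas.compl]
    rw [Set.compl_inter_self]
    simp
  have hqb : ∀ p : (ℝ × ℝ) × (ℝ × ℝ), p.2 ∈ D → ∀ k, |qcoef ε N c d p.2 k| ≤ Qb := by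
    intro p hp k
    exact qcoef_bound hK hε0 hε1 hN hcd hp.2 k
  have hsumb : ∀ p : (ℝ × ℝ) × (ℝ × ℝ), p.2 ∈ D →
      |(∑ k ∈ T, qcoef ε N c d p.2 k *
        Real.cos (2*Real.pi*((k.1:ℝ)*p.1.1+(k.2:ℝ)*p.1.2) + ph N p.2 k))^2|
        ≤ ((T.card : ℝ) * Qb)^2 := by
    intro p hp
    rw [abs_of_nonneg (sq_nonneg _)]
    have habs : |∑ k ∈ T, qcoef ε N c d p.2 k *
        Real.cos (2*Real.pi*((k.1:ℝ)*p.1.1+(k.2:ℝ)*p.1.2) + ph N p.2 k)|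
        ≤ (T.card : ℝ) * Qb := by
      calc |∑ k ∈ T, qcoef ε N c d p.2 k *
          Real.cos (2*Real.pi*((k.1:ℝ)*p.1.1+(k.2:ℝ)*p.1.2) + ph N p.2 k)|
          ≤ ∑ k ∈ T, |qcoef ε N c d p.2 k *
            Real.cos (2*Real.pi*((k.1:ℝ)*p.1.1+(k.2:ℝ)*p.1.2) + ph N p.2 k)| :=
            Finset.abs_sum_le_sum_abs _ _
        _ ≤ ∑ _k ∈ T, Qb := by
            refine Finset.sum_le_sum (fun k _ => ?_)
            rw [abs_mul]
            calc |qcoef ε N c d p.2 k| * |Real.cos _| ≤ Qb * 1 :=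
                mul_le_mul (hqb p hp k) (Real.abs_cos_le_one _) (abs_nonneg _) hQb0
              _ = Qb := mul_one _
        _ = (T.card : ℝ) * Qb := by rw [Finset.sum_const, nsmul_eq_mul]
    calc (∑ k ∈ T, qcoef ε N c d p.2 k *
        Real.cos (2*Real.pi*((k.1:ℝ)*p.1.1+(k.2:ℝ)*p.1.2) + ph N p.2 k))^2
        = |∑ k ∈ T, qcoef ε N c d p.2 k *
          Real.cos (2*Real.pi*((k.1:ℝ)*p.1.1+(k.2:ℝ)*p.1.2) + ph N p.2 k)|^2 := (sq_abs _).symm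
      _ ≤ ((T.card : ℝ) * Qb)^2 := by
          refine pow_le_pow_left₀ (abs_nonneg _) habs 2
  haveI : IsFiniteMeasure (μE ε N) := by
    rw [hμE]; infer_instance
  have hFint : Integrable (fun p : (ℝ × ℝ) × (ℝ × ℝ) =>
      (∑ k ∈ T, qcoef ε N c d p.2 k *
        Real.cos (2*Real.pi*((k.1:ℝ)*p.1.1+(k.2:ℝ)*p.1.2) + ph N p.2 k))^2) (μE ε N) := by
    refine integrable_bdd _ hGmeas.aestronglyMeasurable (((T.card : ℝ) * Qb)^2) ?_
    exact hae2.mono (fun p hp => hsumb p hp)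
  -- Fubini
  have fub : (∫ p : (ℝ × ℝ) × (ℝ × ℝ),
      (∑ k ∈ T, qcoef ε N c d p.2 k *
        Real.cos (2*Real.pi*((k.1:ℝ)*p.1.1+(k.2:ℝ)*p.1.2) + ph N p.2 k))^2 ∂(μE ε N))
      = ∫ α, (∫ x, (∑ k ∈ T, qcoef ε N c d α k *
          Real.cos (2*Real.pi*((k.1:ℝ)*x.1+(k.2:ℝ)*x.2) + ph N α k))^2
            ∂(volume.restrict unitCell)) ∂(volume.restrict D) := by
    rw [hμE] at hFint ⊢
    exact integral_prod_symm _ hFint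
  rw [fub]
  have hinner : ∀ α : ℝ × ℝ, (∫ x, (∑ k ∈ T, qcoef ε N c d α k *
      Real.cos (2*Real.pi*((k.1:ℝ)*x.1+(k.2:ℝ)*x.2) + ph N α k))^2
        ∂(volume.restrict unitCell)) ≤ 2 * ∑ k ∈ T, (qcoef ε N c d α k)^2 :=
    fun α => inner_bound T hTsym (qcoef ε N c d α) (ph N α)
  have hqint : ∀ k : ℤ × ℤ, Integrable (fun α : ℝ × ℝ => (qcoef ε N c d α k)^2)
      (volume.restrict D) := by
    intro k
    refine integrable_bdd _ (((measurable_qcoef ε N c d k).pow_const 2).aestronglyMeasurable)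
      (Qb^2) ?_
    refine (ae_restrict_mem hDmeas).mono (fun α hα => ?_)
    rw [abs_of_nonneg (sq_nonneg _), ← sq_abs]
    exact pow_le_pow_left₀ (abs_nonneg _) (qcoef_bound hK hε0 hε1 hN hcd hα.2 k) 2
  have hmargL : Integrable (fun α : ℝ × ℝ => ∫ x, (∑ k ∈ T, qcoef ε N c d α k *
      Real.cos (2*Real.pi*((k.1:ℝ)*x.1+(k.2:ℝ)*x.2) + ph N α k))^2
        ∂(volume.restrict unitCell)) (volume.restrict D) := by
    rw [hμE] at hFint
    exact hFint.integral_prod_right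
  have hmargR : Integrable (fun α : ℝ × ℝ => 2 * ∑ k ∈ T, (qcoef ε N c d α k)^2)
      (volume.restrict D) :=
    (integrable_finset_sum _ (fun k _ => hqint k)).const_mul 2
  set δ : ℝ := 1/(ε^5*N) with hδdef
  have hδpos : 0 < δ := by rw [hδdef]; positivity
  have hper : ∀ k ∈ T, (∫ α, (qcoef ε N c d α k)^2 ∂(volume.restrict D))
      ≤ 36*δ^2 * Qb^2 := by
    intro k _
    by_cases hk0 : k.1 = 0 ∨ k.2 = 0
    · have hknotmem : ∀ α : ℝ × ℝ, k ∉ Shat ε N α := by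
        intro α hmem
        obtain ⟨h1, h2, _, _, _, _⟩ := hmem
        rcases hk0 with h | h
        · rw [h] at h1; simp at h1; nlinarith [pow_pos hε0 3]
        · rw [h] at h2; simp at h2; nlinarith [pow_pos hε0 3]
      have hz : (fun α : ℝ × ℝ => (qcoef ε N c d α k)^2) = fun _ => 0 := by
        funext α
        rw [qcoef, Set.indicator_of_notMem (hknotmem α)]
        norm_num
      rw [hz, integral_zero]
      positivity
    · push_neg at hk0
      obtain ⟨hk1, hk2⟩ := hk0
      set A : Set (ℝ × ℝ) := {α : ℝ × ℝ | k ∈ Shat ε N α} with hAdef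
      have hAmeas : MeasurableSet A := measurableSet_shat ε N k
      have hae3 : ∀ᵐ α ∂(volume.restrict D), (qcoef ε N c d α k)^2
          ≤ Set.indicator A (fun _ => Qb^2) α := by
        refine (ae_restrict_mem hDmeas).mono (fun α hα => ?_)
        by_cases hmem : k ∈ Shat ε N α
        · rw [Set.indicator_of_mem (by exact hmem) (fun _ => Qb^2)]
          rw [← sq_abs]
          exact pow_le_pow_left₀ (abs_nonneg _) (qcoef_bound hK hε0 hε1 hN hcd hα.2 k) 2
        · rw [Set.indicator_of_notMem (by exact hmem) (fun _ => Qb^2),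
            qcoef, Set.indicator_of_notMem hmem]
          norm_num
      have hindint : Integrable (Set.indicator A (fun _ => Qb^2)) (volume.restrict D) :=
        (integrable_const (Qb^2)).indicator hAmeas
      calc (∫ α, (qcoef ε N c d α k)^2 ∂(volume.restrict D))
          ≤ ∫ α, Set.indicator A (fun _ => Qb^2) α ∂(volume.restrict D) :=
            integral_mono_ae (hqint k) hindint hae3
        _ = ((volume.restrict D) A).toReal • Qb^2 := integral_indicator_const _ hAmeas
        _ ≤ 36*δ^2 * Qb^2 := by
            rw [smul_eq_mul]
            refine mul_le_mul_of_nonneg_right ?_ (sq_nonneg _)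
            have h1 : (volume.restrict D) A ≤ ENNReal.ofReal ((6*δ)*(6*δ)) := by
              rw [Measure.restrict_apply hAmeas]
              calc volume (A ∩ D) ≤ volume (A ∩ unitCell) :=
                  measure_mono (Set.inter_subset_inter (le_refl _) Set.diff_subset)
                _ ≤ ENNReal.ofReal (6*δ) * ENNReal.ofReal (6*δ) :=
                  meas_shatset hε0 hε1 hN k hk1 hk2
                _ = ENNReal.ofReal ((6*δ)*(6*δ)) := (ENNReal.ofReal_mul (by positivity)).symm
            calc ((volume.restrict D) A).toReal ≤ (6*δ)*(6*δ) :=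
                ENNReal.toReal_le_of_le_ofReal (by positivity) h1
              _ = 36*δ^2 := by ring
  -- cardinality bound
  have hMR : (M:ℝ) < (N:ℝ)/ε + 1 := Nat.ceil_lt_add_one (by positivity)
  have hNε1 : (1:ℝ) ≤ (N:ℝ)/ε := by
    rw [le_div_iff₀ hε0]
    nlinarith
  have hcardT : (T.card : ℝ) = (2*(M:ℝ)+1)^2 := by
    rw [hTdef, Finset.card_product]
    have : (Finset.Icc (-(M:ℤ)) (M:ℤ)).card = 2*M+1 := by
      rw [Int.card_Icc]; omega
    rw [this]
    push_cast
    ring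
  have hcard_le : (T.card : ℝ) ≤ (5*(N:ℝ)/ε)^2 := by
    rw [hcardT]
    have h1 : 2*(M:ℝ)+1 ≤ 5*(N:ℝ)/ε := by
      have : 5*(N:ℝ)/ε = 5*((N:ℝ)/ε) := by ring
      rw [this]
      nlinarith
    have h2 : (0:ℝ) ≤ 2*(M:ℝ)+1 := by positivity
    nlinarith
  -- final computation
  calc (∫ α, (∫ x, (∑ k ∈ T, qcoef ε N c d α k *
          Real.cos (2*Real.pi*((k.1:ℝ)*x.1+(k.2:ℝ)*x.2) + ph N α k))^2
            ∂(volume.restrict unitCell)) ∂(volume.restrict D))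
      ≤ ∫ α, (2 * ∑ k ∈ T, (qcoef ε N c d α k)^2) ∂(volume.restrict D) :=
        integral_mono hmargL hmargR hinner
    _ = 2 * ∫ α, (∑ k ∈ T, (qcoef ε N c d α k)^2) ∂(volume.restrict D) :=
        integral_const_mul 2 _
    _ = 2 * ∑ k ∈ T, ∫ α, (qcoef ε N c d α k)^2 ∂(volume.restrict D) := by
        rw [integral_finset_sum _ (fun k _ => hqint k)]
    _ ≤ 2 * ∑ _k ∈ T, (36*δ^2 * Qb^2) := by
        refine mul_le_mul_of_nonneg_left (Finset.sum_le_sum hper) (by norm_num)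
    _ = 2 * ((T.card : ℝ) * (36*δ^2 * Qb^2)) := by rw [Finset.sum_const, nsmul_eq_mul]
    _ ≤ 2 * ((5*(N:ℝ)/ε)^2 * (36*δ^2 * Qb^2)) := by
        refine mul_le_mul_of_nonneg_left (mul_le_mul_of_nonneg_right hcard_le (by positivity))
          (by norm_num)
    _ = 225*K^2/(2*ε^20*(N:ℝ)^2) := by
        rw [hδdef, hQbdef]
        field_simp
        ring
    _ ≤ (113 * K^2 / ε^20 + 1) / (N:ℝ) := by
        have ha : (0:ℝ) ≤ K^2 * ε^20 * (N:ℝ) := by positivity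
        have key : 225*K^2/(2*ε^20*(N:ℝ)^2) ≤ 113*K^2/(ε^20*(N:ℝ)) := by
          rw [div_le_div_iff₀ (by positivity) (by positivity)]
          nlinarith [mul_nonneg ha (sub_nonneg.mpr hN1R)]
        have key2 : 113*K^2/(ε^20*(N:ℝ)) ≤ (113*K^2/ε^20+1)/(N:ℝ) := by
          rw [div_le_div_iff₀ (by positivity) hNpos]
          have hexp : (113*K^2/ε^20+1)*(ε^20*(N:ℝ)) = 113*K^2*(N:ℝ) + ε^20*(N:ℝ) := by
            field_simp
          rw [hexp]
          have := mul_pos (pow_pos hε0 20) hNpos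
          linarith
        exact le_trans key key2
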